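/- Let $U$ be continuous, strictly increasing, $\beta>0$, $\delta>1$, and $Y$ a strictly positive random variable with $\mathbb{E}[|U(Y)|]<\infty$. Define the certainty equivalent $C(Y,\delta,\beta)=\varphi(\eta(Y,\delta,\beta))$ where $\varphi(w)=U^{-1}\big(\frac{U(w)+\beta U(\delta w)}{1+\beta}\big)$ and $\eta$ is the GDA value. Then for $1\le\delta_1<\delta_2$, $C(Y,\delta_1,\beta)\le C(Y,\delta_2,\beta)$. -/

import Mathlib

open MeasureTheory

/-- The GDA certainty equivalent `C(Y, δ, β) = φ(η(Y, δ, β))`, where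
`U(φ(w)) = (U(w) + β U(δ w)) / (1 + β)`, is nondecreasing in `δ` on `[1, ∞)`. -/
theorem gda_certainty_equivalent_monotone_in_delta_ge_one
    {Ω : Type*} [MeasurableSpace Ω] (μ : Measure Ω) [IsProbabilityMeasure μ]
    (U : ℝ → ℝ) (hUc : ContinuousOn U (Set.Ioi 0)) (hUm : StrictMonoOn U (Set.Ioi 0))
    (β δ₁ δ₂ : ℝ) (hβ : 0 < β) (hδ₁ : 1 ≤ δ₁) (hδ : δ₁ < δ₂)
    (Y : Ω → ℝ) (hYmeas : Measurable Y) (hYpos : ∀ ω, 0 < Y ω)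
    (hInt : Integrable (fun ω => U (Y ω)) μ)
    (η₁ η₂ C₁ C₂ : ℝ) (hη₁pos : 0 < η₁) (hη₂pos : 0 < η₂)
    (hC₁pos : 0 < C₁) (hC₂pos : 0 < C₂)
    (hη₁ : U η₁ = (∫ ω, U (Y ω) ∂μ) - β * ∫ ω, max (U (δ₁ * η₁) - U (Y ω)) 0 ∂μ)
    (hη₂ : U η₂ = (∫ ω, U (Y ω) ∂μ) - β * ∫ ω, max (U (δ₂ * η₂) - U (Y ω)) 0 ∂μ)
    (hC₁ : U C₁ = (U η₁ + β * U (δ₁ * η₁)) / (1 + β))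
    (hC₂ : U C₂ = (U η₂ + β * U (δ₂ * η₂)) / (1 + β)) :
    C₁ ≤ C₂ := by
  have ha₁pos : 0 < δ₁ * η₁ := mul_pos (lt_of_lt_of_le one_pos hδ₁) hη₁pos
  have hδ₂ : (1:ℝ) ≤ δ₂ := hδ₁.trans hδ.le
  have ha₂pos : 0 < δ₂ * η₂ := mul_pos (lt_of_lt_of_le one_pos hδ₂) hη₂pos
  have hint : ∀ c : ℝ, Integrable (fun ω => max (c - U (Y ω)) 0) μ := fun c =>
    ((integrable_const c).sub hInt).pos_part
  -- step 1: δ₁ * η₁ ≤ δ₂ * η₂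
  have key : δ₁ * η₁ ≤ δ₂ * η₂ := by
    by_contra h
    push_neg at h
    have hUle : U (δ₂ * η₂) ≤ U (δ₁ * η₁) :=
      (hUm.le_iff_le (Set.mem_Ioi.mpr ha₂pos) (Set.mem_Ioi.mpr ha₁pos)).mpr h.le
    have hI : (∫ ω, max (U (δ₂ * η₂) - U (Y ω)) 0 ∂μ)
        ≤ ∫ ω, max (U (δ₁ * η₁) - U (Y ω)) 0 ∂μ :=
      integral_mono (hint _) (hint _) (fun ω => max_le_max (by linarith) le_rfl)
    have hUη : U η₁ ≤ U η₂ := by rw [hη₁, hη₂]; nlinarith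
    have hηle : η₁ ≤ η₂ :=
      (hUm.le_iff_le (Set.mem_Ioi.mpr hη₁pos) (Set.mem_Ioi.mpr hη₂pos)).mp hUη
    nlinarith
  -- step 2
  have hb : U (δ₁ * η₁) ≤ U (δ₂ * η₂) :=
    (hUm.le_iff_le (Set.mem_Ioi.mpr ha₁pos) (Set.mem_Ioi.mpr ha₂pos)).mpr key
  have hI2 : (∫ ω, max (U (δ₂ * η₂) - U (Y ω)) 0 ∂μ)
      - (∫ ω, max (U (δ₁ * η₁) - U (Y ω)) 0 ∂μ) ≤ U (δ₂ * η₂) - U (δ₁ * η₁) := by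
    have := integral_mono ((hint (U (δ₂ * η₂))).sub (hint (U (δ₁ * η₁))))
      (integrable_const (U (δ₂ * η₂) - U (δ₁ * η₁)))
      (fun ω => by
        simp only [Pi.sub_apply]
        rcases le_total (U (Y ω)) (U (δ₁ * η₁)) with h | h
        · rw [max_eq_left (by linarith), max_eq_left (by linarith)]; linarith
        · rcases le_total (U (Y ω)) (U (δ₂ * η₂)) with h' | h'
          · rw [max_eq_left (by linarith), max_eq_right (by linarith)]; linarith
          · rw [max_eq_right (by linarith), max_eq_right (by linarith)]; linarith)
    simp only [Pi.sub_apply] at this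
    rwa [integral_sub (hint (U (δ₂ * η₂))) (hint (U (δ₁ * η₁))), integral_const, probReal_univ,
      one_smul] at this
  have hUC : U C₁ ≤ U C₂ := by
    rw [hC₁, hC₂]
    have hnum : U η₁ + β * U (δ₁ * η₁) ≤ U η₂ + β * U (δ₂ * η₂) := by
      rw [hη₁, hη₂]; nlinarith
    gcongr
  exact (hUm.le_iff_le (Set.mem_Ioi.mpr hC₁pos) (Set.mem_Ioi.mpr hC₂pos)).mp hUC
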